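/- Let (x, p) be an HZ equilibrium. Then there exist prices p' such that (x, p') is an HZ equilibrium and p'_j = 0 for at least one item j ∈ G. -/

import Mathlib

open Finset

/-- A fractional perfect matching. -/
def IsFPM {A G : Type*} [Fintype A] [Fintype G] (x : A → G → ℝ) : Prop :=
  (∀ i j, 0 ≤ x i j) ∧ (∀ i, ∑ j, x i j = 1) ∧ (∀ j, ∑ i, x i j = 1)

/-- An HZ equilibrium. -/
def IsHZEquilibrium {A G : Type*} [Fintype A] [Fintype G]
    (u : A → G → ℝ) (x : A → G → ℝ) (p : G → ℝ) : Prop :=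
  IsFPM x ∧ (∀ j, 0 ≤ p j) ∧ (∀ i, ∑ j, p j * x i j ≤ 1) ∧
  ∀ i, ∀ y : G → ℝ, (∀ j, 0 ≤ y j) → (∑ j, y j) = 1 → (∑ j, p j * y j) ≤ 1 →
    (∑ j, u i j * y j ≤ ∑ j, u i j * x i j) ∧
    ((∑ j, u i j * y j) = (∑ j, u i j * x i j) → ∑ j, p j * x i j ≤ ∑ j, p j * y j)

/-- Given an HZ equilibrium (x, p), there exist prices p' making
(x, p') an HZ equilibrium with at least one item priced at zero. -/
theorem hz_equilibrium_exists_zero_price {A G : Type*} [Fintype A] [Fintype G] [Nonempty G]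
    (u : A → G → ℝ) (x : A → G → ℝ) (p : G → ℝ)
    (h : IsHZEquilibrium u x p) :
    ∃ p' : G → ℝ, IsHZEquilibrium u x p' ∧ ∃ j : G, p' j = 0 := by
  obtain ⟨⟨hx0, hxr, hxc⟩, hp0, hbud, hopt⟩ := h
  obtain ⟨j₀, -, hj₀⟩ := Finset.exists_min_image (univ : Finset G) p
    ⟨Classical.arbitrary G, mem_univ _⟩
  set m := p j₀ with hm
  have hm0 : 0 ≤ m := hp0 j₀
  have hmin : ∀ j, m ≤ p j := fun j => hj₀ j (mem_univ j)
  by_cases hm1 : m < 1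
  · set c := 1 - m with hc
    have hc0 : 0 < c := by linarith
    have key : ∀ y : G → ℝ,
        ∑ j, (p j - m) / c * y j = (∑ j, p j * y j - m * ∑ j, y j) / c := by
      intro y
      simp only [div_mul_eq_mul_div, sub_mul]
      rw [← Finset.sum_div, Finset.sum_sub_distrib, ← Finset.mul_sum]
    refine ⟨fun j => (p j - m) / c, ⟨⟨hx0, hxr, hxc⟩, ?_, ?_, ?_⟩, j₀, by simp [hm]⟩
    · intro j
      exact div_nonneg (by linarith [hmin j]) hc0.le
    · intro i
      rw [key, hxr i, mul_one, div_le_one hc0]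
      linarith [hbud i]
    · intro i y hy0 hy1 hyb
      rw [key, hy1, mul_one, div_le_one hc0] at hyb
      have hyb' : ∑ j, p j * y j ≤ 1 := by linarith
      obtain ⟨h1, h2⟩ := hopt i y hy0 hy1 hyb'
      refine ⟨h1, fun he => ?_⟩
      rw [key, key, hxr i, hy1, mul_one]
      exact (div_le_div_iff_of_pos_right hc0).mpr (by linarith [h2 he])
  · have hge : ∀ j ∈ (univ : Finset G), (1 : ℝ) ≤ p j :=
      fun j _ => le_trans (not_lt.mp hm1) (hmin j)
    have hcard : ((Fintype.card A : ℝ)) = (Fintype.card G : ℝ) := by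
      calc (Fintype.card A : ℝ) = ∑ i : A, (1 : ℝ) := by simp
        _ = ∑ i : A, ∑ j, x i j := by exact Finset.sum_congr rfl fun i _ => (hxr i).symm
        _ = ∑ j, ∑ i : A, x i j := Finset.sum_comm
        _ = ∑ j : G, (1 : ℝ) := Finset.sum_congr rfl fun j _ => hxc j
        _ = (Fintype.card G : ℝ) := by simp
    have hsum : ∑ j, p j ≤ (Fintype.card G : ℝ) := by
      calc ∑ j, p j = ∑ j, p j * ∑ i, x i j := by
            exact Finset.sum_congr rfl fun j _ => by rw [hxc j, mul_one]
        _ = ∑ j, ∑ i, p j * x i j := by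
            exact Finset.sum_congr rfl fun j _ => Finset.mul_sum _ _ _
        _ = ∑ i, ∑ j, p j * x i j := Finset.sum_comm
        _ ≤ ∑ i : A, 1 := Finset.sum_le_sum fun i _ => hbud i
        _ = (Fintype.card A : ℝ) := by simp
        _ = (Fintype.card G : ℝ) := hcard
    have heq : ∑ j : G, (1 : ℝ) = ∑ j, p j :=
      le_antisymm (Finset.sum_le_sum hge) (by simpa using hsum)
    have hall : ∀ j : G, p j = 1 := by
      intro j
      have := (Finset.sum_eq_sum_iff_of_le hge).mp heq j (mem_univ j)
      exact this.symm
    refine ⟨fun _ => 0, ⟨⟨hx0, hxr, hxc⟩, fun j => le_refl 0, fun i => by simp, ?_⟩,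
      Classical.arbitrary G, rfl⟩
    intro i y hy0 hy1 _
    have hb : ∑ j, p j * y j ≤ 1 := by
      simp only [hall, one_mul]
      rw [hy1]
    exact ⟨(hopt i y hy0 hy1 hb).1, fun _ => by simp⟩
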